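/- Let Ĝ be a group and z ∈ Ĝ a central element of order 2 such that Q = Ĝ/⟨z⟩ is an elementary abelian 2-group. Let V ⊆ Q be the set of elements all of whose lifts to Ĝ have order dividing 2. Then V is a subgroup of Q if and only if the preimage V̂ of V in Ĝ is an abelian subgroup of Ĝ; in that case V̂ is an elementary abelian 2-group isomorphic to V × ℤ/2ℤ. -/

import Mathlib

/-- The cyclic subgroup generated by a central element is normal. -/
theorem zpowers_normal_of_mem_center {G : Type*} [Group G] {z : G}
    (hz : z ∈ Subgroup.center G) : (Subgroup.zpowers z).Normal := by
  constructor
  intro n hn g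
  obtain ⟨k, rfl⟩ := hn
  have hc : Commute g z := Subgroup.mem_center_iff.mp hz g
  refine ⟨k, ?_⟩
  rw [(hc.zpow_right k).eq, mul_inv_cancel_right]


private lemma aux_iso {A B : Type*} [CommGroup A] [CommGroup B]
    (hA : ∀ a : A, a ^ 2 = 1) (f : A →* B) (hf : Function.Surjective f)
    (x : A) (hx : x ≠ 1) (hker : ∀ a : A, f a = 1 ↔ a = 1 ∨ a = x) :
    Nonempty (A ≃* (B × Multiplicative (ZMod 2))) := by
  haveI : Fact (Nat.Prime 2) := ⟨Nat.prime_two⟩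
  letI : Module (ZMod 2) (Additive A) := AddCommGroup.zmodModule (n := 2) (fun m => by
    have h := hA m.toMul
    rw [pow_two] at h
    rw [two_nsmul]
    exact h)
  have hx0 : Additive.ofMul x ≠ 0 := by
    simpa using hx
  set K : Submodule (ZMod 2) (Additive A) :=
    Submodule.span (ZMod 2) {Additive.ofMul x} with hK
  obtain ⟨U, hU⟩ := Submodule.exists_isCompl K
  -- elements of K map to 1 under f
  have hKone : ∀ m : Additive A, m ∈ K → f m.toMul = 1 := by
    intro m hm
    rw [hK, Submodule.mem_span_singleton] at hm
    obtain ⟨c, rfl⟩ := hm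
    fin_cases c
    · show f (Additive.toMul ((0 : ZMod 2) • Additive.ofMul x)) = 1
      rw [zero_smul]
      simp
    · show f (Additive.toMul ((1 : ZMod 2) • Additive.ofMul x)) = 1
      rw [one_smul]
      show f x = 1
      exact (hker x).mpr (Or.inr rfl)
  -- the monoid hom from Multiplicative U to B
  let g : Multiplicative U →* B :=
    { toFun := fun u => f (Multiplicative.toAdd u).1.toMul
      map_one' := by simp
      map_mul' := fun u v => map_mul f _ _ }
  have hg : Function.Bijective g := by
    constructor
    · intro u v huv
      have h1 : f ((Multiplicative.toAdd u).1 - (Multiplicative.toAdd v).1).toMul = 1 := by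
        rw [toMul_sub, div_eq_mul_inv, map_mul, map_inv]
        simp only [g, MonoidHom.coe_mk, OneHom.coe_mk] at huv
        rw [huv, mul_inv_cancel]
      have hmem : ((Multiplicative.toAdd u) : U).1 - ((Multiplicative.toAdd v) : U).1 ∈ U :=
        sub_mem (Multiplicative.toAdd u).2 (Multiplicative.toAdd v).2
      rcases (hker _).mp h1 with h | h
      · have : ((Multiplicative.toAdd u) : U).1 = ((Multiplicative.toAdd v) : U).1 := by
          have := sub_eq_zero.mp (show _ - _ = (0 : Additive A) by exact h)
          exact this
        exact Multiplicative.toAdd.injective (Subtype.ext this)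
      · exfalso
        have hxK : (Additive.ofMul x) ∈ K := Submodule.mem_span_singleton_self _
        have hd : ((Multiplicative.toAdd u) : U).1 - ((Multiplicative.toAdd v) : U).1 = 0 := by
          have hmemK : ((Multiplicative.toAdd u) : U).1 - ((Multiplicative.toAdd v) : U).1 ∈ K := by
            have : ((Multiplicative.toAdd u) : U).1 - ((Multiplicative.toAdd v) : U).1
                = Additive.ofMul x := by exact h
            rw [this]; exact hxK
          exact (Submodule.mem_bot _).mp (hU.inf_eq_bot ▸ Submodule.mem_inf.mpr ⟨hmemK, hmem⟩)
        rw [hd] at h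
        exact hx0 (by simpa using h.symm)
    · intro b
      obtain ⟨a, ha⟩ := hf b
      have hsup : Additive.ofMul a ∈ K ⊔ U := by rw [hU.sup_eq_top]; trivial
      obtain ⟨k, hk, u, hu, hku⟩ := Submodule.mem_sup.mp hsup
      refine ⟨Multiplicative.ofAdd ⟨u, hu⟩, ?_⟩
      have : f u.toMul = b := by
        have h2 : k.toMul * u.toMul = a := by
          have h3 : (k + u).toMul = k.toMul * u.toMul := rfl
          rw [← h3, hku, toMul_ofMul]
        calc f u.toMul = f k.toMul * f u.toMul := by rw [hKone k hk, one_mul]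
          _ = f (k.toMul * u.toMul) := (map_mul f _ _).symm
          _ = b := by rw [h2, ha]
      simpa [g] using this
  -- assemble the equivalences
  haveI : NoZeroSMulDivisors (ZMod 2) (Additive A) := inferInstance
  let e2 : ZMod 2 ≃ₗ[ZMod 2] K :=
    LinearEquiv.toSpanNonzeroSingleton (ZMod 2) (Additive A) (Additive.ofMul x) hx0
  let e1 : Additive A ≃+ (K × U) := (Submodule.prodEquivOfIsCompl K U hU).symm.toAddEquiv
  let s2 : A ≃* Multiplicative (K × U) := AddEquiv.toMultiplicativeRight e1
  let s4 : Multiplicative (K : Submodule (ZMod 2) (Additive A)) ≃* Multiplicative (ZMod 2) :=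
    AddEquiv.toMultiplicative e2.symm.toAddEquiv
  let s5 : Multiplicative U ≃* B := MulEquiv.ofBijective g hg
  exact ⟨s2.trans ((MulEquiv.prodMultiplicative _ _).trans
    ((MulEquiv.prodCongr s4 s5).trans (MulEquiv.prodComm)))⟩

theorem V_subgroup_iff_preimage_abelian
    {Ghat : Type*} [Group Ghat] (z : Ghat)
    (hz : z ∈ Subgroup.center Ghat) (hzord : orderOf z = 2) :
    letI := zpowers_normal_of_mem_center hz
    ∀ (_ : ∀ a b : Ghat ⧸ Subgroup.zpowers z, a * b = b * a)
      (_ : ∀ a : Ghat ⧸ Subgroup.zpowers z, a ^ 2 = 1),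
    letI V : Set (Ghat ⧸ Subgroup.zpowers z) :=
      {m | ∀ g : Ghat, (QuotientGroup.mk g : Ghat ⧸ Subgroup.zpowers z) = m → g ^ 2 = 1}
    letI Vhat : Set Ghat := (QuotientGroup.mk : Ghat → Ghat ⧸ Subgroup.zpowers z) ⁻¹' V
    ((∃ W : Subgroup (Ghat ⧸ Subgroup.zpowers z), (W : Set _) = V) ↔
      (∀ a ∈ Vhat, ∀ b ∈ Vhat, a * b = b * a)) ∧
    (∀ W : Subgroup (Ghat ⧸ Subgroup.zpowers z), (W : Set _) = V →
      (∀ a ∈ Vhat, a ^ 2 = 1) ∧ (∀ a ∈ Vhat, ∀ b ∈ Vhat, a * b = b * a) ∧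
      ∃ What : Subgroup Ghat, (What : Set Ghat) = Vhat ∧
        Nonempty (What ≃* (W × Multiplicative (ZMod 2)))) := by
  intro hcomm _hsq
  letI := zpowers_normal_of_mem_center hz
  set V : Set (Ghat ⧸ Subgroup.zpowers z) :=
      {m | ∀ g : Ghat, (QuotientGroup.mk g : Ghat ⧸ Subgroup.zpowers z) = m → g ^ 2 = 1} with hVdef
  set Vhat : Set Ghat := (QuotientGroup.mk : Ghat → Ghat ⧸ Subgroup.zpowers z) ⁻¹' V with hVhatdef
  have hz2 : z ^ 2 = 1 := by rw [← hzord]; exact pow_orderOf_eq_one z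
  have hz1 : z ≠ 1 := by
    intro h
    rw [h, orderOf_one] at hzord
    omega
  -- elements of zpowers z
  have hzp : ∀ w : Ghat, w ∈ Subgroup.zpowers z → w = 1 ∨ w = z := by
    intro w hw
    obtain ⟨k, rfl⟩ := hw
    show z ^ k = 1 ∨ z ^ k = z
    rcases Int.even_or_odd k with ⟨m, hm⟩ | ⟨m, hm⟩
    · left
      have : z ^ k = (z ^ (2 : ℤ)) ^ m := by rw [← zpow_mul, hm]; ring_nf
      rw [this]
      have h2 : z ^ (2 : ℤ) = 1 := by rw [show ((2 : ℤ) = ((2 : ℕ) : ℤ)) from rfl, zpow_natCast, hz2]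
      rw [h2, one_zpow]
    · right
      have : z ^ k = (z ^ (2 : ℤ)) ^ m * z := by rw [← zpow_mul, ← zpow_add_one, hm]
      rw [this]
      have h2 : z ^ (2 : ℤ) = 1 := by rw [show ((2 : ℤ) = ((2 : ℕ) : ℤ)) from rfl, zpow_natCast, hz2]
      rw [h2, one_zpow, one_mul]
  -- membership in Vhat
  have hmemVhat : ∀ a : Ghat, a ∈ Vhat ↔ a ^ 2 = 1 := by
    intro a
    constructor
    · intro ha; exact ha a rfl
    · intro ha g hg
      have : a⁻¹ * g ∈ Subgroup.zpowers z := by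
        rw [← QuotientGroup.eq]
        exact hg.symm
      rcases hzp _ this with h | h
      · have : g = a := by
          have := congrArg (a * ·) h
          simpa [mul_assoc] using this
        rw [this]; exact ha
      · have hg' : g = a * z := by
          have := congrArg (a * ·) h
          simpa [mul_assoc] using this
        have hc : Commute a z := Subgroup.mem_center_iff.mp hz a
        rw [hg', hc.mul_pow, ha, hz2, one_mul]
  have hmemVhat' : ∀ a : Ghat,
      (QuotientGroup.mk a : Ghat ⧸ Subgroup.zpowers z) ∈ V ↔ a ^ 2 = 1 := hmemVhat
  -- forward direction : V subgroup → Vhat abelian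
  have fwd : (∃ W : Subgroup (Ghat ⧸ Subgroup.zpowers z), (W : Set _) = V) →
      ∀ a ∈ Vhat, ∀ b ∈ Vhat, a * b = b * a := by
    rintro ⟨W, hW⟩ a ha b hb
    have ha2 : a ^ 2 = 1 := (hmemVhat a).mp ha
    have hb2 : b ^ 2 = 1 := (hmemVhat b).mp hb
    have haW : (QuotientGroup.mk a : Ghat ⧸ Subgroup.zpowers z) ∈ W := by
      rw [← SetLike.mem_coe, hW]; exact ha
    have hbW : (QuotientGroup.mk b : Ghat ⧸ Subgroup.zpowers z) ∈ W := by
      rw [← SetLike.mem_coe, hW]; exact hb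
    have habW : (QuotientGroup.mk (a * b) : Ghat ⧸ Subgroup.zpowers z) ∈ V := by
      rw [← hW, SetLike.mem_coe]
      exact mul_mem haW hbW
    have hab2 : (a * b) ^ 2 = 1 := (hmemVhat' (a * b)).mp habW
    have hainv : a⁻¹ = a := by
      rw [pow_two] at ha2; exact inv_eq_of_mul_eq_one_right ha2
    have hbinv : b⁻¹ = b := by
      rw [pow_two] at hb2; exact inv_eq_of_mul_eq_one_right hb2
    have : (a * b)⁻¹ = a * b := by
      rw [pow_two] at hab2; exact inv_eq_of_mul_eq_one_right hab2
    calc a * b = (a * b)⁻¹ := this.symm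
      _ = b⁻¹ * a⁻¹ := mul_inv_rev a b
      _ = b * a := by rw [hainv, hbinv]
  -- backward : Vhat abelian → V subgroup
  have bwd : (∀ a ∈ Vhat, ∀ b ∈ Vhat, a * b = b * a) →
      ∃ W : Subgroup (Ghat ⧸ Subgroup.zpowers z), (W : Set _) = V := by
    intro hab
    have Vone : (1 : Ghat ⧸ Subgroup.zpowers z) ∈ V := by
      intro g hg
      have : g ∈ Subgroup.zpowers z := (QuotientGroup.eq_one_iff g).mp hg
      rcases hzp g this with h | h
      · rw [h, one_pow]
      · rw [h]; exact hz2
    have Vmul : ∀ {m n : Ghat ⧸ Subgroup.zpowers z}, m ∈ V → n ∈ V → m * n ∈ V := by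
      intro m n hm hn
      obtain ⟨a, rfl⟩ := QuotientGroup.mk_surjective m
      obtain ⟨b, rfl⟩ := QuotientGroup.mk_surjective n
      have ha : a ∈ Vhat := hm
      have hb : b ∈ Vhat := hn
      have ha2 : a ^ 2 = 1 := (hmemVhat a).mp ha
      have hb2 : b ^ 2 = 1 := (hmemVhat b).mp hb
      have hcom : Commute a b := hab a ha b hb
      have : (a * b) ^ 2 = 1 := by
        rw [hcom.mul_pow, ha2, hb2, one_mul]
      exact (hmemVhat' (a * b)).mpr this
    have Vinv : ∀ {m : Ghat ⧸ Subgroup.zpowers z}, m ∈ V → m⁻¹ ∈ V := by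
      intro m hm
      obtain ⟨a, rfl⟩ := QuotientGroup.mk_surjective m
      have ha2 : a ^ 2 = 1 := (hmemVhat' a).mp hm
      have hainv : a⁻¹ = a := by
        rw [pow_two] at ha2; exact inv_eq_of_mul_eq_one_right ha2
      show (QuotientGroup.mk a : Ghat ⧸ Subgroup.zpowers z)⁻¹ ∈ V
      have h4 : (QuotientGroup.mk a : Ghat ⧸ Subgroup.zpowers z)⁻¹ = QuotientGroup.mk a⁻¹ := rfl
      rw [h4, hainv]
      exact hm
    exact ⟨{ carrier := V, one_mem' := Vone, mul_mem' := Vmul, inv_mem' := Vinv }, rfl⟩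
  refine ⟨⟨fwd, bwd⟩, ?_⟩
  intro W hW
  have hcomVhat : ∀ a ∈ Vhat, ∀ b ∈ Vhat, a * b = b * a := fwd ⟨W, hW⟩
  refine ⟨fun a ha => (hmemVhat a).mp ha, hcomVhat, ?_⟩
  -- the preimage subgroup
  set What : Subgroup Ghat := Subgroup.comap (QuotientGroup.mk' (Subgroup.zpowers z)) W
    with hWhatdef
  have hWhatcoe : (What : Set Ghat) = Vhat := by
    ext g
    simp only [hWhatdef, SetLike.mem_coe, Subgroup.mem_comap, QuotientGroup.mk'_apply]
    rw [← SetLike.mem_coe, hW]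
    rfl
  refine ⟨What, hWhatcoe, ?_⟩
  have hmemWhat : ∀ g : Ghat, g ∈ What ↔ g ∈ Vhat := by
    intro g; rw [← SetLike.mem_coe, hWhatcoe]
  -- z belongs to What
  have hzWhat : z ∈ What := by
    rw [hmemWhat, hmemVhat]; exact hz2
  -- commutative group structures
  letI : CommGroup What :=
    { (inferInstance : Group What) with
      mul_comm := fun a b => Subtype.ext
        (hcomVhat a.1 ((hmemWhat a.1).mp a.2) b.1 ((hmemWhat b.1).mp b.2)) }
  letI : CommGroup W :=
    { (inferInstance : Group W) with
      mul_comm := fun a b => Subtype.ext (hcomm a.1 b.1) }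
  have hA : ∀ a : What, a ^ 2 = 1 := by
    intro a
    apply Subtype.ext
    have : ((a ^ 2 : What) : Ghat) = (a : Ghat) ^ 2 := rfl
    rw [this]
    exact (hmemVhat a.1).mp ((hmemWhat a.1).mp a.2)
  -- the quotient map restricted
  let f : What →* W :=
    { toFun := fun a => ⟨QuotientGroup.mk a.1, a.2⟩
      map_one' := rfl
      map_mul' := fun a b => rfl }
  have hf : Function.Surjective f := by
    rintro ⟨w, hw⟩
    have hwV : w ∈ V := by rw [← hW]; exact hw
    obtain ⟨g, hg⟩ := QuotientGroup.mk_surjective w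
    have hgWhat : g ∈ What := by
      rw [hmemWhat]
      show (QuotientGroup.mk g : Ghat ⧸ Subgroup.zpowers z) ∈ V
      rw [hg]; exact hwV
    exact ⟨⟨g, hgWhat⟩, Subtype.ext hg⟩
  have hker : ∀ a : What, f a = 1 ↔ a = 1 ∨ a = ⟨z, hzWhat⟩ := by
    intro a
    constructor
    · intro h
      have h1 : (QuotientGroup.mk a.1 : Ghat ⧸ Subgroup.zpowers z) = 1 := by
        have := congrArg Subtype.val h
        exact this
      have := (QuotientGroup.eq_one_iff a.1).mp h1
      rcases hzp a.1 this with h2 | h2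
      · exact Or.inl (Subtype.ext h2)
      · exact Or.inr (Subtype.ext h2)
    · rintro (rfl | rfl)
      · exact map_one f
      · apply Subtype.ext
        show (QuotientGroup.mk z : Ghat ⧸ Subgroup.zpowers z) = 1
        exact (QuotientGroup.eq_one_iff z).mpr (Subgroup.mem_zpowers z)
  have hxne : (⟨z, hzWhat⟩ : What) ≠ 1 := by
    intro h
    exact hz1 (congrArg Subtype.val h)
  exact aux_iso hA f hf ⟨z, hzWhat⟩ hxne hker
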